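/- Let S be a symmetric linear relation in a Hilbert space H. If the relation S² = {(f,h) : ∃ g, (f,g) ∈ S and (g,h) ∈ S} is essentially self-adjoint (its closure equals its adjoint), then S itself is essentially self-adjoint. -/

import Mathlib

open scoped InnerProductSpace

noncomputable section

variable {H : Type*} [NormedAddCommGroup H] [InnerProductSpace ℂ H] [CompleteSpace H]

/-- The adjoint relation `S* = {(f,g) : ⟪f,v⟫ = ⟪g,u⟫ for all (u,v) ∈ S}`. -/
def adjRel (S : Set (H × H)) : Set (H × H) :=
  {p | ∀ q ∈ S, ⟪p.1, q.2⟫_ℂ = ⟪p.2, q.1⟫_ℂ}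

/-- The square of a linear relation: `S² = {(f,h) : ∃ g, (f,g) ∈ S ∧ (g,h) ∈ S}`. -/
def sqRel (S : Set (H × H)) : Set (H × H) :=
  {p | ∃ g, (p.1, g) ∈ S ∧ (g, p.2) ∈ S}

/-- A relation is essentially self-adjoint if its closure equals its adjoint. -/
def EssSelfAdjointRel (S : Set (H × H)) : Prop :=
  closure S = adjRel S

lemma adjRel_isClosed (S : Set (H × H)) : IsClosed (adjRel S) := by
  have h : adjRel S = ⋂ q ∈ S, {p : H × H | ⟪p.1, q.2⟫_ℂ = ⟪p.2, q.1⟫_ℂ} := by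
    ext p; simp [adjRel]
  rw [h]
  exact isClosed_biInter fun q _ => isClosed_eq
    (continuous_fst.inner continuous_const) (continuous_snd.inner continuous_const)

lemma adjRel_sub_mem {S : Set (H × H)} {p q : H × H}
    (hp : p ∈ adjRel S) (hq : q ∈ adjRel S) : p - q ∈ adjRel S := by
  intro r hr
  have h1 := hp r hr
  have h2 := hq r hr
  simp only [Prod.fst_sub, Prod.snd_sub, inner_sub_left]
  rw [h1, h2]

lemma key_zero (S : Submodule ℂ (H × H))
    (hsym : ∀ p ∈ S, ∀ q ∈ S, ⟪p.1, q.2⟫_ℂ = ⟪p.2, q.1⟫_ℂ)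
    (hsq : EssSelfAdjointRel (sqRel (S : Set (H × H))))
    {f g : H} (hfg : (f, g) ∈ adjRel (S : Set (H × H)))
    (horth : ∀ p ∈ S, ⟪f, p.1⟫_ℂ + ⟪g, p.2⟫_ℂ = 0) : f = 0 := by
  have hg : (g, -f) ∈ adjRel (S : Set (H × H)) := by
    intro q hq
    have h := horth q hq
    simp only [inner_neg_left]
    linear_combination h
  have hmem : (f, -f) ∈ adjRel (sqRel (S : Set (H × H))) := by
    rintro ⟨u, w⟩ ⟨m, hum, hmw⟩
    have h1 : ⟪f, w⟫_ℂ = ⟪g, m⟫_ℂ := hfg (m, w) hmw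
    have h2 : ⟪g, m⟫_ℂ = ⟪-f, u⟫_ℂ := hg (u, m) hum
    exact h1.trans h2
  rw [← hsq] at hmem
  have hP : closure (sqRel (S : Set (H × H))) ⊆ {p : H × H | 0 ≤ (⟪p.1, p.2⟫_ℂ).re} := by
    apply closure_minimal
    · rintro ⟨u, w⟩ ⟨m, hum, hmw⟩
      have h : ⟪u, w⟫_ℂ = ⟪m, m⟫_ℂ := hsym (u, m) hum (m, w) hmw
      have h2 : 0 ≤ (⟪m, m⟫_ℂ).re := by
        have := inner_self_nonneg (𝕜 := ℂ) (x := m); simpa using this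
      simpa only [Set.mem_setOf_eq, h] using h2
    · exact isClosed_le continuous_const
        (Complex.continuous_re.comp (continuous_fst.inner continuous_snd))
  have h0 := hP hmem
  simp only [Set.mem_setOf_eq, inner_neg_right, Complex.neg_re] at h0
  have hf : (⟪f, f⟫_ℂ).re ≤ 0 := by linarith
  have : RCLike.re ⟪f, f⟫_ℂ ≤ 0 := by simpa using hf
  exact re_inner_self_nonpos.mp this

lemma key_zero' (S : Submodule ℂ (H × H))
    (hsym : ∀ p ∈ S, ∀ q ∈ S, ⟪p.1, q.2⟫_ℂ = ⟪p.2, q.1⟫_ℂ)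
    (hsq : EssSelfAdjointRel (sqRel (S : Set (H × H))))
    {f g : H} (hfg : (f, g) ∈ adjRel (S : Set (H × H)))
    (horth : ∀ p ∈ S, ⟪f, p.1⟫_ℂ + ⟪g, p.2⟫_ℂ = 0) : f = 0 ∧ g = 0 := by
  have hf : f = 0 := key_zero S hsym hsq hfg horth
  subst hf
  refine ⟨rfl, ?_⟩
  have hg' : (g, (0 : H)) ∈ adjRel (S : Set (H × H)) := by
    intro q hq
    have h := horth q hq
    simp only [inner_zero_left, zero_add] at h
    simp only [inner_zero_left, h]
  have horth' : ∀ p ∈ S, ⟪g, p.1⟫_ℂ + ⟪(0 : H), p.2⟫_ℂ = 0 := by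
    intro q hq
    have h := hfg q hq
    simp only [inner_zero_left] at h
    simp only [inner_zero_left, add_zero, ← h]
  exact key_zero S hsym hsq hg' horth'

/-- If the square `S²` of a symmetric linear relation `S` in a Hilbert
space is essentially self-adjoint, then `S` itself is essentially self-adjoint. -/
theorem statement4 (S : Submodule ℂ (H × H))
    (hsym : ∀ p ∈ S, ∀ q ∈ S, ⟪p.1, q.2⟫_ℂ = ⟪p.2, q.1⟫_ℂ)
    (hsq : EssSelfAdjointRel (sqRel (S : Set (H × H)))) :
    EssSelfAdjointRel (S : Set (H × H)) := by
  have hclosed := adjRel_isClosed (S : Set (H × H))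
  have hsub : (S : Set (H × H)) ⊆ adjRel (S : Set (H × H)) := fun p hp q hq => hsym p hp q hq
  have hclsub : closure (S : Set (H × H)) ⊆ adjRel (S : Set (H × H)) :=
    closure_minimal hsub hclosed
  refine subset_antisymm hclsub ?_
  intro a ha
  -- move to the L² product space, where we have orthogonal projections
  set E := WithLp 2 (H × H) with hE
  let e : E ≃L[ℂ] H × H := WithLp.prodContinuousLinearEquiv 2 ℂ H H
  let K : Submodule ℂ E := S.comap (e.toLinearEquiv : E →ₗ[ℂ] H × H)
  let T : Submodule ℂ E := K.topologicalClosure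
  have hKset : (K : Set E) = ⇑e ⁻¹' (S : Set (H × H)) := rfl
  have hTset : (T : Set E) = ⇑e ⁻¹' closure (S : Set (H × H)) := by
    have h := e.toHomeomorph.preimage_closure (S : Set (H × H))
    simp only [ContinuousLinearEquiv.coe_toHomeomorph] at h
    rw [Submodule.topologicalClosure_coe, hKset, ← h]
  haveI : CompleteSpace T := K.isClosed_topologicalClosure.completeSpace_coe
  obtain ⟨t, ht, d, hd, hsum⟩ := T.exists_add_mem_mem_orthogonal (e.symm a)
  have het : e t ∈ closure (S : Set (H × H)) := by
    have := ht
    rw [← SetLike.mem_coe, hTset] at this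
    exact this
  have hetadj : e t ∈ adjRel (S : Set (H × H)) := hclsub het
  have hdec : a = e t + e d := by
    rw [← map_add, ← hsum, e.apply_symm_apply]
  have hdadj : e d ∈ adjRel (S : Set (H × H)) := by
    have h := adjRel_sub_mem ha hetadj
    have : a - e t = e d := by rw [hdec]; abel
    rwa [this] at h
  have horth : ∀ p ∈ S, ⟪(e d).1, p.1⟫_ℂ + ⟪(e d).2, p.2⟫_ℂ = 0 := by
    intro p hp
    have hmemK : e.symm p ∈ K := by
      rw [← SetLike.mem_coe, hKset]
      simp only [Set.mem_preimage, e.apply_symm_apply]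
      exact hp
    have hmemT : e.symm p ∈ T := K.le_topologicalClosure hmemK
    have h0 : ⟪e.symm p, d⟫_ℂ = 0 := (Submodule.mem_orthogonal T d).mp hd _ hmemT
    have h1 : ⟪p.1, (e d).1⟫_ℂ + ⟪p.2, (e d).2⟫_ℂ = 0 := h0
    have := congrArg (starRingEnd ℂ) h1
    simpa [inner_conj_symm] using this
  have hfg : ((e d).1, (e d).2) ∈ adjRel (S : Set (H × H)) := by
    simpa using hdadj
  obtain ⟨h1, h2⟩ := key_zero' S hsym hsq hfg horth
  have hd0 : e d = 0 := by
    have : e d = ((e d).1, (e d).2) := rfl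
    rw [this, h1, h2]; rfl
  rw [hdec, hd0, add_zero]
  exact het

end
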